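/- arXiv:2212.05252 — 3 statements merged into one kernel-verified Lean document; each statement's English description precedes it below -/
import Mathlib

section
/- For p ≥ 0, e^{-x} ∑_{n=1}^∞ ( ∑_{j=0}^{n-1} (j+r)_{p,λ} ) x^n/n! = ∫_0^x φ_{p,λ}^{(r)}(t) dt. -/
/-- Generalized falling factorial `(y)_{m,λ} = y(y-λ)⋯(y-(m-1)λ)`. -/
noncomputable def degFallFact (y l : ℝ) (m : ℕ) : ℝ :=
  ∏ i ∈ Finset.range m, (y - i * l)

/-- Degenerate r-Bell polynomial via the Dobinski-like formula
`φ_{p,λ}^{(r)}(x) = e^{-x} ∑_{k≥0} (k+r)_{p,λ} x^k/k!`. -/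
noncomputable def degBell (l : ℝ) (p r : ℕ) (x : ℝ) : ℝ :=
  Real.exp (-x) * ∑' k : ℕ, degFallFact (k + r) l p * x ^ k / k.factorial

lemma abs_degFallFact_le (l : ℝ) (p r j : ℕ) :
    |degFallFact (j + r) l p| ≤ ((r + p * |l| + 1) * (j + 1)) ^ p := by
  unfold degFallFact
  rw [Finset.abs_prod]
  calc ∏ i ∈ Finset.range p, |(j : ℝ) + r - i * l|
      ≤ ∏ _i ∈ Finset.range p, ((r + p * |l| + 1) * (j + 1)) := by
        apply Finset.prod_le_prod (fun i _ => abs_nonneg _)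
        intro i hi
        have hi' : (i : ℝ) ≤ p := by
          exact_mod_cast (Finset.mem_range.mp hi).le
        have h1 : |(j : ℝ) + r - i * l| ≤ (j : ℝ) + r + i * |l| := by
          calc |(j : ℝ) + r - i * l| ≤ |(j : ℝ) + r| + |(i : ℝ) * l| := abs_sub _ _
            _ = (j : ℝ) + r + i * |l| := by
                rw [abs_of_nonneg (by positivity), abs_mul, abs_of_nonneg (by positivity)]
        refine h1.trans ?_
        have h2 : (i : ℝ) * |l| ≤ p * |l| :=
          mul_le_mul_of_nonneg_right hi' (abs_nonneg _)
        nlinarith [mul_nonneg (Nat.cast_nonneg (α := ℝ) r) (Nat.cast_nonneg (α := ℝ) j),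
          mul_nonneg (mul_nonneg (Nat.cast_nonneg (α := ℝ) p) (abs_nonneg l))
            (Nat.cast_nonneg (α := ℝ) j)]
    _ = ((r + p * |l| + 1) * (j + 1)) ^ p := by rw [Finset.prod_const, Finset.card_range]

lemma summable_master (l : ℝ) (p r : ℕ) (y : ℝ) :
    Summable (fun j : ℕ => |degFallFact (j + r) l p| * |y| ^ j / j.factorial) := by
  set C : ℝ := (r + p * |l| + 1) with hC
  have hC0 : 0 < C := by positivity
  refine Summable.of_nonneg_of_le (fun j => by positivity) (fun j => ?_)
    (((Real.summable_pow_div_factorial (2 ^ p * |y|)).mul_left ((2 * C) ^ p)))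
  have hb := abs_degFallFact_le l p r j
  have hj2 : ((j : ℝ) + 1) ≤ 2 ^ (j + 1) := by
    have := Nat.lt_two_pow_self (n := j + 1)
    exact_mod_cast this.le
  have key : (C * (j + 1)) ^ p ≤ (2 * C) ^ p * (2 ^ p : ℝ) ^ j := by
    have h1 : C * ((j : ℝ) + 1) ≤ 2 * C * 2 ^ j := by
      calc C * ((j : ℝ) + 1) ≤ C * 2 ^ (j + 1) :=
            mul_le_mul_of_nonneg_left hj2 hC0.le
        _ = 2 * C * 2 ^ j := by ring
    calc (C * ((j : ℝ) + 1)) ^ p ≤ (2 * C * 2 ^ j) ^ p :=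
          pow_le_pow_left₀ (by positivity) h1 p
      _ = (2 * C) ^ p * (2 ^ p : ℝ) ^ j := by
          rw [mul_pow, ← pow_mul, ← pow_mul, Nat.mul_comm j p]
  calc |degFallFact (j + r) l p| * |y| ^ j / j.factorial
      ≤ (C * (j + 1)) ^ p * |y| ^ j / j.factorial := by gcongr
    _ ≤ (2 * C) ^ p * (2 ^ p : ℝ) ^ j * |y| ^ j / j.factorial := by gcongr
    _ = (2 * C) ^ p * ((2 ^ p * |y|) ^ j / j.factorial) := by
        rw [mul_pow]; ring

lemma hasDerivAt_exp_sum (j : ℕ) (y : ℝ) :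
    HasDerivAt (fun y : ℝ => Real.exp (-y) * ∑ m ∈ Finset.range (j + 1), y ^ m / m.factorial)
      (-(Real.exp (-y) * y ^ j / j.factorial)) y := by
  have h1 : HasDerivAt (fun y : ℝ => Real.exp (-y)) (-Real.exp (-y)) y := by
    have := (Real.hasDerivAt_exp (-y)).comp y (hasDerivAt_neg y); simp at this; exact this
  induction j with
  | zero => simpa using h1.mul_const (1 : ℝ)
  | succ j ih =>
      have h2 : HasDerivAt (fun y : ℝ => y ^ (j + 1) / ((j + 1).factorial : ℝ))
          ((((j : ℝ) + 1) * y ^ j) / ((j + 1).factorial : ℝ)) y := by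
        have := (hasDerivAt_pow (j + 1) y).div_const ((j + 1).factorial : ℝ)
        simpa using this
      have h3 := ih.add (h1.mul h2)
      have hfun : (fun y : ℝ => Real.exp (-y) * ∑ m ∈ Finset.range (j + 2), y ^ m / m.factorial)
          = fun y : ℝ => (Real.exp (-y) * ∑ m ∈ Finset.range (j + 1), y ^ m / m.factorial)
            + Real.exp (-y) * (y ^ (j + 1) / ((j + 1).factorial : ℝ)) := by
        funext z; rw [Finset.sum_range_succ, mul_add]
      rw [show j + 1 + 1 = j + 2 from rfl, hfun]
      refine h3.congr_deriv ?_
      have hfac : ((j + 1).factorial : ℝ) = ((j : ℝ) + 1) * j.factorial := by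
        rw [Nat.factorial_succ]; push_cast; ring
      have hj0 : (j.factorial : ℝ) ≠ 0 := Nat.cast_ne_zero.mpr (Nat.factorial_ne_zero j)
      have hj1 : ((j : ℝ) + 1) ≠ 0 := by positivity
      rw [hfac]
      field_simp
      ring

lemma integral_exp_pow (j : ℕ) (x : ℝ) :
    ∫ t in (0:ℝ)..x, Real.exp (-t) * t ^ j / j.factorial =
      1 - Real.exp (-x) * ∑ m ∈ Finset.range (j + 1), x ^ m / m.factorial := by
  have hF : ∀ t : ℝ, HasDerivAt
      (fun y : ℝ => 1 - Real.exp (-y) * ∑ m ∈ Finset.range (j + 1), y ^ m / m.factorial)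
      (Real.exp (-t) * t ^ j / j.factorial) t := by
    intro t
    exact ((hasDerivAt_const t (1 : ℝ)).sub (hasDerivAt_exp_sum j t)).congr_deriv (by simp)
  have hcont : Continuous fun t : ℝ => Real.exp (-t) * t ^ j / j.factorial := by
    fun_prop
  have h := intervalIntegral.integral_eq_sub_of_hasDerivAt
    (fun t _ => hF t) (hcont.intervalIntegrable 0 x)
  rw [h]
  have h0 : ∑ m ∈ Finset.range (j + 1), (0 : ℝ) ^ m / m.factorial = 1 := by
    rw [Finset.sum_eq_single 0]
    · simp
    · intro m _ hm; simp [zero_pow hm]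
    · simp
  simp [h0]

open MeasureTheory intervalIntegral in
lemma integral_degBell (l : ℝ) (p r : ℕ) (x : ℝ) :
    ∫ t in (0:ℝ)..x, degBell l p r t
      = ∑' j : ℕ, degFallFact (j + r) l p *
          ∫ t in (0:ℝ)..x, Real.exp (-t) * t ^ j / j.factorial := by
  set a : ℕ → ℝ := fun j => degFallFact (j + r) l p with ha
  set F : ℕ → ℝ → ℝ := fun j t => a j * (Real.exp (-t) * t ^ j / j.factorial) with hF
  have hFc : ∀ j, Continuous (F j) := by intro j; fun_prop
  have hrepr : ∀ t : ℝ, degBell l p r t = ∑' k, F k t := by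
    intro t
    rw [degBell, ← tsum_mul_left]
    exact tsum_congr fun k => by rw [hF]; ring
  have hbound : ∀ j : ℕ, ∀ t ∈ Set.uIoc (0:ℝ) x,
      ‖F j t‖ ≤ |a j| * (Real.exp |x| * |x| ^ j) / j.factorial := by
    intro j t ht
    have htx : |t| ≤ |x| := by
      rcases Set.mem_uIoc.mp ht with ⟨h1, h2⟩ | ⟨h1, h2⟩ <;>
        refine abs_le.mpr ⟨?_, ?_⟩ <;>
          [skip; skip; skip; skip] <;>
          nlinarith [neg_abs_le x, le_abs_self x]
    have hexp : Real.exp (-t) ≤ Real.exp |x| :=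
      Real.exp_le_exp.mpr (by cases abs_cases t with
        | inl h => nlinarith [htx]
        | inr h => nlinarith [htx])
    have : ‖F j t‖ = |a j| * (Real.exp (-t) * |t| ^ j) / j.factorial := by
      simp only [hF, Real.norm_eq_abs, abs_mul, abs_div, abs_pow,
        abs_of_pos (Real.exp_pos (-t)), Nat.abs_cast, mul_div_assoc]
    rw [this]
    gcongr
  have hsum : Summable (fun j => ∫ t in Set.uIoc (0: ℝ) x, ‖F j t‖) := by
    refine Summable.of_nonneg_of_le
      (fun j => integral_nonneg (fun t => norm_nonneg _)) (fun j => ?_)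
      (((summable_master l p r x).mul_left (Real.exp |x| * (volume (Set.uIoc (0:ℝ) x)).toReal)))
    have hle : ∫ t in Set.uIoc (0:ℝ) x, ‖F j t‖
        ≤ (|a j| * (Real.exp |x| * |x| ^ j) / j.factorial) * (volume (Set.uIoc (0:ℝ) x)).toReal := by
      have := norm_setIntegral_le_of_norm_le_const (μ := volume)
        (s := Set.uIoc (0:ℝ) x) (f := fun t => ‖F j t‖)
        (C := |a j| * (Real.exp |x| * |x| ^ j) / j.factorial)
        (by rw [Set.uIoc]; exact measure_Ioc_lt_top)
        (fun t ht => by rw [norm_norm]; exact hbound j t ht)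
      exact (le_abs_self _).trans this
    refine hle.trans (le_of_eq ?_)
    ring
  have hint : ∀ j : ℕ, Integrable (F j) (volume.restrict (Set.uIoc (0:ℝ) x)) := by
    intro j
    exact ((hFc j).intervalIntegrable 0 x).def'
  have hswap := MeasureTheory.integral_tsum_of_summable_integral_norm hint hsum
  rw [intervalIntegral_eq_integral_uIoc]
  have h1 : ∫ t in Set.uIoc (0:ℝ) x, degBell l p r t = ∑' j, ∫ t in Set.uIoc (0:ℝ) x, F j t :=
    (setIntegral_congr_fun measurableSet_uIoc (fun t _ => hrepr t)).trans hswap.symm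
  rw [h1, smul_eq_mul, ← tsum_mul_left]
  refine tsum_congr fun j => ?_
  rw [intervalIntegral_eq_integral_uIoc]
  have h2 : ∫ t in Set.uIoc (0:ℝ) x, F j t
      = a j * ∫ t in Set.uIoc (0:ℝ) x, Real.exp (-t) * t ^ j / j.factorial := by
    rw [hF]; exact MeasureTheory.integral_const_mul _ _
  rw [h2, smul_eq_mul, ha]
  ring

/-- `e^{-x} ∑_{n≥1} (∑_{j=0}^{n-1} (j+r)_{p,λ}) x^n/n! = ∫_0^x φ_{p,λ}^{(r)}(t) dt`. -/
theorem exp_neg_mul_y_eq_integral (l : ℝ) (p r : ℕ) (x : ℝ) :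
    Real.exp (-x) *
      ∑' n : ℕ, (∑ j ∈ Finset.range n, degFallFact (j + r) l p) * x ^ n / n.factorial =
      ∫ t in (0 : ℝ)..x, degBell l p r t := by
  set a : ℕ → ℝ := fun j => degFallFact (j + r) l p with ha
  have hexp_tsum : ∑' m : ℕ, x ^ m / (m.factorial : ℝ) = Real.exp x := by
    rw [Real.exp_eq_exp_ℝ, NormedSpace.exp_eq_tsum_div]
  have hs : Summable fun m : ℕ => x ^ m / (m.factorial : ℝ) :=
    Real.summable_pow_div_factorial x
  have hsabs : Summable fun m : ℕ => |x| ^ m / (m.factorial : ℝ) :=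
    Real.summable_pow_div_factorial |x|
  -- summability of the shifted coefficients
  have hc : Summable (fun j : ℕ => |a j| * |x| ^ (j + 1) / ((j + 1).factorial : ℝ)) := by
    refine Summable.of_nonneg_of_le (fun j => by positivity) (fun j => ?_)
      ((summable_master l p r x).mul_left |x|)
    have h1 : (j.factorial : ℝ) ≤ ((j + 1).factorial : ℝ) := by
      exact_mod_cast Nat.factorial_le (Nat.le_succ j)
    have h0 : (0:ℝ) < j.factorial := by positivity
    calc |a j| * |x| ^ (j + 1) / ((j + 1).factorial : ℝ)
        ≤ |a j| * |x| ^ (j + 1) / (j.factorial : ℝ) := by gcongr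
      _ = |x| * (|a j| * |x| ^ j / j.factorial) := by rw [pow_succ]; ring
  -- the two-dimensional family
  set G : ℕ × ℕ → ℝ :=
    fun q => a q.1 * (x ^ (q.2 + q.1 + 1) / ((q.2 + q.1 + 1).factorial : ℝ)) with hG
  have hGsum : Summable G := by
    refine Summable.of_norm_bounded
      (hc.mul_of_nonneg hsabs (fun j => by positivity) (fun k => by positivity)) ?_
    rintro ⟨j, k⟩
    have hfac : ((j + 1).factorial : ℝ) * (k.factorial : ℝ) ≤ ((k + j + 1).factorial : ℝ) := by
      have h2 := Nat.le_of_dvd (Nat.factorial_pos _)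
        (Nat.factorial_mul_factorial_dvd_factorial_add (j + 1) k)
      have h3 : j + 1 + k = k + j + 1 := by omega
      rw [h3] at h2
      exact_mod_cast h2
    have hnorm : ‖G (j, k)‖ = |a j| * (|x| ^ (k + j + 1) / ((k + j + 1).factorial : ℝ)) := by
      simp only [hG, Real.norm_eq_abs, abs_mul, abs_div, abs_pow, Nat.abs_cast]
    rw [hnorm]
    have hxpow : |x| ^ (k + j + 1) = |x| ^ (j + 1) * |x| ^ k := by
      rw [← pow_add]; ring_nf
    have h4 : (0:ℝ) < ((j+1).factorial : ℝ) * (k.factorial : ℝ) := by positivity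
    calc |a j| * (|x| ^ (k + j + 1) / ((k + j + 1).factorial : ℝ))
        ≤ |a j| * (|x| ^ (k + j + 1) / (((j + 1).factorial : ℝ) * (k.factorial : ℝ))) := by
          gcongr
      _ = |a j| * |x| ^ (j + 1) / ((j + 1).factorial : ℝ) * (|x| ^ k / (k.factorial : ℝ)) := by
          rw [hxpow]; field_simp
  have hinner : ∀ j : ℕ, Summable fun k : ℕ =>
      a j * (x ^ (k + j + 1) / ((k + j + 1).factorial : ℝ)) :=
    fun j => ((summable_nat_add_iff (j + 1)).mpr hs).mul_left (a j)
  -- the reindexed family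
  set H : ℕ × ℕ → ℝ :=
    fun q => if q.2 < q.1 then a q.2 * (x ^ q.1 / (q.1.factorial : ℝ)) else 0 with hH
  set i : ℕ × ℕ → ℕ × ℕ := fun q => (q.2 + q.1 + 1, q.1) with hi
  have hiinj : Function.Injective i := by
    rintro ⟨j, k⟩ ⟨j', k'⟩ h
    simp only [hi, Prod.mk.injEq] at h
    obtain ⟨h1, h2⟩ := h
    exact Prod.ext h2 (by omega)
  have hHi : ∀ q : ℕ × ℕ, H (i q) = G q := by
    rintro ⟨j, k⟩
    simp only [hH, hi, hG]
    rw [if_pos (by omega)]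
  have hsupp : ∀ q ∉ Set.range i, H q = 0 := by
    rintro ⟨n, j⟩ hq
    by_cases h : j < n
    · refine absurd ⟨(j, n - j - 1), ?_⟩ hq
      have hn : n - j - 1 + j + 1 = n := by omega
      simp [hi, hn]
    · simp [hH, h]
  have hHsum : Summable H :=
    (hiinj.summable_iff hsupp).mp (hGsum.congr (fun q => (hHi q).symm))
  have hinner2 : ∀ n : ℕ, Summable fun j : ℕ => H (n, j) := by
    intro n
    refine summable_of_ne_finset_zero (s := Finset.range n) (fun j hj => ?_)
    simp only [hH]
    rw [if_neg (by simpa using hj)]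
  -- now compute
  rw [integral_degBell l p r x]
  have step1 : ∀ j : ℕ, a j * (∫ t in (0:ℝ)..x, Real.exp (-t) * t ^ j / j.factorial)
      = Real.exp (-x) * ∑' k : ℕ, a j * (x ^ (k + j + 1) / ((k + j + 1).factorial : ℝ)) := by
    intro j
    rw [integral_exp_pow]
    have htail : ∑' k : ℕ, x ^ (k + (j + 1)) / ((k + (j + 1)).factorial : ℝ)
        = Real.exp x - ∑ m ∈ Finset.range (j + 1), x ^ m / m.factorial := by
      have h := Summable.sum_add_tsum_nat_add (f := fun m : ℕ => x ^ m / (m.factorial : ℝ)) (j + 1) hs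
      rw [hexp_tsum] at h
      linarith
    have hEX : Real.exp (-x) * Real.exp x = 1 := by rw [← Real.exp_add]; simp
    have htail' : ∑' k : ℕ, x ^ (k + j + 1) / ((k + j + 1).factorial : ℝ)
        = Real.exp x - ∑ m ∈ Finset.range (j + 1), x ^ m / m.factorial := htail
    rw [tsum_mul_left, htail']
    linear_combination (-(a j)) * hEX
  rw [tsum_congr step1, tsum_mul_left]
  congr 1
  calc ∑' n : ℕ, (∑ j ∈ Finset.range n, a j) * x ^ n / n.factorial
      = ∑' n : ℕ, ∑' j : ℕ, H (n, j) := by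
        refine tsum_congr fun n => ?_
        rw [tsum_eq_sum (s := Finset.range n)
          (fun j hj => by simp only [hH]; rw [if_neg (by simpa using hj)])]
        have hterm : ∀ j ∈ Finset.range n, H (n, j) = a j * (x ^ n / (n.factorial : ℝ)) :=
          fun j hj => by simp only [hH]; rw [if_pos (Finset.mem_range.mp hj)]
        rw [Finset.sum_congr rfl hterm, ← Finset.sum_mul, mul_div_assoc]
    _ = ∑' q : ℕ × ℕ, H q := (Summable.tsum_prod' hHsum hinner2).symm
    _ = ∑' q : ℕ × ℕ, G q := by
        rw [← Function.Injective.tsum_eq hiinj (Function.support_subset_iff'.mpr hsupp)]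
        exact tsum_congr hHi
    _ = ∑' j : ℕ, ∑' k : ℕ, a j * (x ^ (k + j + 1) / ((k + j + 1).factorial : ℝ)) :=
        Summable.tsum_prod' hGsum hinner
end

section
/- For p ≥ 0 and all real x, ∑_{n=0}^∞ ( ∑_{j=0}^{n} (j+r)_{p,λ} ) x^n/n! = e^x ∑_{k=0}^p {p+r brace k+r}_{r,λ} ( x^k + x^{k+1}/(k+1) ). -/
open Finset

lemma aux_L1 (k n : ℕ) :
    ∑ j ∈ range (n + 1), ∏ i ∈ range k, ((j : ℝ) - i) =
      (∏ i ∈ range (k + 1), ((n : ℝ) + 1 - i)) / (k + 1) := by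
  induction n with
  | zero =>
    rcases Nat.eq_zero_or_pos k with hk | hk
    · subst hk; simp
    · rw [Finset.sum_range_one,
        Finset.prod_eq_zero (Finset.mem_range.2 hk) (by simp),
        Finset.prod_eq_zero (Finset.mem_range.2 (by omega : 1 < k + 1))
          (by norm_num)]
      simp
  | succ n ih =>
    have hk : ((k : ℝ) + 1) ≠ 0 := by positivity
    rw [Finset.sum_range_succ, ih]
    push_cast
    rw [div_add' _ _ _ hk]
    congr 1
    · rw [Finset.prod_range_succ,
        Finset.prod_range_succ' (fun i => ((n : ℝ) + 1 + 1 - i))]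
      have : ∀ i ∈ range k, (n : ℝ) + 1 + 1 - ((i + 1 : ℕ) : ℝ) = (n : ℝ) + 1 - i := by
        intro i _; push_cast; ring
      rw [Finset.prod_congr rfl this]
      push_cast; ring


lemma aux_Lasc (t m : ℕ) : ∏ j ∈ range t, ((m : ℝ) + 1 + j) = (m + t).factorial / m.factorial := by
  induction t with
  | zero => rw [Nat.add_zero]; simp [div_self (by positivity : ((m.factorial : ℝ)) ≠ 0)]
  | succ t ih =>
    rw [Finset.prod_range_succ, ih]
    have h : ((m.factorial : ℝ)) ≠ 0 := by positivity
    rw [show m + (t+1) = (m + t) + 1 from rfl, Nat.factorial_succ]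
    push_cast
    field_simp
    ring

lemma aux_Lprod (k m : ℕ) : ∏ i ∈ range (k + 1), ((m : ℝ) + k + 1 - i) =
    (m + k + 1).factorial / m.factorial := by
  rw [← Finset.prod_range_reflect (fun i => (m : ℝ) + k + 1 - i) (k + 1)]
  have h : ∀ j ∈ range (k + 1), (m : ℝ) + k + 1 - ((k + 1 - 1 - j : ℕ) : ℝ) = (m : ℝ) + 1 + j := by
    intro j hj
    rw [Finset.mem_range] at hj
    rw [Nat.cast_sub (by omega)]
    push_cast
    ring
  rw [Finset.prod_congr rfl h, aux_Lasc]
  norm_num [show m + (k+1) = m + k + 1 by omega]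

lemma aux_Lexp (x : ℝ) : Real.exp x = ∑' n : ℕ, x ^ n / n.factorial := by
  rw [Real.exp_eq_exp_ℝ, NormedSpace.exp_eq_tsum_div]

lemma aux_Lsum (x : ℝ) (k : ℕ) :
    Summable (fun n : ℕ => (∏ i ∈ range (k + 1), ((n : ℝ) + 1 - i)) * x ^ n / n.factorial) ∧
    ∑' n : ℕ, (∏ i ∈ range (k + 1), ((n : ℝ) + 1 - i)) * x ^ n / n.factorial =
      x ^ (k + 1) * Real.exp x + ((k : ℝ) + 1) * x ^ k * Real.exp x := by
  set G : ℕ → ℝ := fun n => (∏ i ∈ range (k + 1), ((n : ℝ) + 1 - i)) * x ^ n / n.factorial with hG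
  have hg : ∀ m : ℕ, G (m + k) = ((m : ℝ) + k + 1) * x ^ (m + k) / m.factorial := by
    intro m
    have hp : ∏ i ∈ range (k + 1), (((m + k : ℕ) : ℝ) + 1 - i) =
        (m + k + 1).factorial / m.factorial := by
      have := aux_Lprod k m
      push_cast at this ⊢
      convert this using 2
    have h1 : ((m.factorial : ℝ)) ≠ 0 := by positivity
    have h2 : (((m + k).factorial : ℝ)) ≠ 0 := by positivity
    rw [hG]
    simp only
    rw [hp, Nat.factorial_succ]
    push_cast
    field_simp
  have h0 : ∀ n ∉ Set.range (fun m : ℕ => m + k), G n = 0 := by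
    intro n hn
    have hnk : n < k := by
      by_contra h
      exact hn ⟨n - k, by simp; omega⟩
    rw [hG]
    simp only
    rw [Finset.prod_eq_zero (Finset.mem_range.2 (by omega : n + 1 < k + 1))]
    · simp
    · push_cast; ring
  have hinj : Function.Injective (fun m : ℕ => m + k) := fun a b h => by simpa using h
  -- summability of the shifted pieces
  have hs1 : Summable (fun m : ℕ => (m : ℝ) * x ^ (m + k) / m.factorial) := by
    rw [← summable_nat_add_iff 1]
    apply ((Real.summable_pow_div_factorial x).mul_left (x ^ (k + 1))).congr
    intro m
    have h1 : ((m.factorial : ℝ)) ≠ 0 := by positivity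
    rw [Nat.factorial_succ]
    push_cast
    field_simp
    ring
  have hs2 : Summable (fun m : ℕ => ((k : ℝ) + 1) * x ^ (m + k) / m.factorial) := by
    apply ((Real.summable_pow_div_factorial x).mul_left (((k : ℝ) + 1) * x ^ k)).congr
    intro m
    rw [pow_add]
    ring
  have hgsum : Summable (fun m : ℕ => G (m + k)) := by
    apply (hs1.add hs2).congr
    intro m
    rw [hg m]
    ring
  have hGsum : Summable G := (hinj.summable_iff h0).1 hgsum
  have hsupp : Function.support G ⊆ Set.range (fun m : ℕ => m + k) := by
    intro n hn
    by_contra h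
    exact hn (h0 n h)
  have ht1 : ∑' m : ℕ, (m : ℝ) * x ^ (m + k) / m.factorial = x ^ (k + 1) * Real.exp x := by
    rw [Summable.tsum_eq_zero_add hs1]
    simp only [Nat.cast_zero, zero_mul, zero_div, zero_add]
    have : ∀ m : ℕ, ((m + 1 : ℕ) : ℝ) * x ^ (m + 1 + k) / (m + 1).factorial =
        x ^ (k + 1) * (x ^ m / m.factorial) := by
      intro m
      have h1 : ((m.factorial : ℝ)) ≠ 0 := by positivity
      rw [Nat.factorial_succ]
      push_cast
      field_simp
      ring
    rw [tsum_congr this, tsum_mul_left, ← aux_Lexp]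
  have ht2 : ∑' m : ℕ, ((k : ℝ) + 1) * x ^ (m + k) / m.factorial =
      ((k : ℝ) + 1) * x ^ k * Real.exp x := by
    have : ∀ m : ℕ, ((k : ℝ) + 1) * x ^ (m + k) / m.factorial =
        (((k : ℝ) + 1) * x ^ k) * (x ^ m / m.factorial) := by
      intro m; rw [pow_add]; ring
    rw [tsum_congr this, tsum_mul_left, ← aux_Lexp]
  refine ⟨hGsum, ?_⟩
  rw [← hinj.tsum_eq hsupp]
  calc ∑' m : ℕ, G (m + k)
      = ∑' m : ℕ, ((m : ℝ) * x ^ (m + k) / m.factorial +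
          ((k : ℝ) + 1) * x ^ (m + k) / m.factorial) := by
        apply tsum_congr; intro m; rw [hg m]; ring
    _ = x ^ (k + 1) * Real.exp x + ((k : ℝ) + 1) * x ^ k * Real.exp x := by
        rw [Summable.tsum_add hs1 hs2, ht1, ht2]

/-- `∑_{n≥0} (∑_{j=0}^n (j+r)_{p,λ}) x^n/n! = e^x ∑_{k=0}^p {p+r brace k+r}_{r,λ} (x^k + x^{k+1}/(k+1))`,
where `S` are the degenerate r-Stirling numbers of the second kind. -/
theorem tsum_partial_sums_eq (l : ℝ) (p r : ℕ) (S : ℕ → ℕ → ℝ)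
    (hS : ∀ (m : ℕ) (x : ℝ), degFallFact (x + r) l m =
      ∑ k ∈ Finset.range (m + 1), S m k * ∏ i ∈ Finset.range k, (x - i))
    (x : ℝ) :
    ∑' n : ℕ, (∑ j ∈ Finset.range (n + 1), degFallFact (j + r) l p) * x ^ n / n.factorial =
      Real.exp x * ∑ k ∈ Finset.range (p + 1), S p k * (x ^ k + x ^ (k + 1) / (k + 1)) := by
  classical
  have hterm : ∀ n : ℕ,
      (∑ j ∈ Finset.range (n + 1), degFallFact (j + r) l p) * x ^ n / n.factorial =
      ∑ k ∈ Finset.range (p + 1), (S p k / ((k : ℝ) + 1)) *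
        ((∏ i ∈ Finset.range (k + 1), ((n : ℝ) + 1 - i)) * x ^ n / n.factorial) := by
    intro n
    have h1 : ∑ j ∈ Finset.range (n + 1), degFallFact (j + r) l p =
        ∑ k ∈ Finset.range (p + 1), S p k *
          ((∏ i ∈ Finset.range (k + 1), ((n : ℝ) + 1 - i)) / ((k : ℝ) + 1)) := by
      have h2 : ∀ j ∈ Finset.range (n + 1), degFallFact (j + r) l p =
          ∑ k ∈ Finset.range (p + 1), S p k * ∏ i ∈ Finset.range k, ((j : ℝ) - i) := by
        intro j _
        exact hS p (j : ℝ)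
      rw [Finset.sum_congr rfl h2, Finset.sum_comm]
      apply Finset.sum_congr rfl
      intro k _
      rw [← Finset.mul_sum, aux_L1]
    rw [h1, Finset.sum_mul, Finset.sum_div]
    apply Finset.sum_congr rfl
    intro k _
    have hk : ((k : ℝ) + 1) ≠ 0 := by positivity
    field_simp
  rw [tsum_congr hterm]
  have hsum : ∀ k ∈ Finset.range (p + 1),
      Summable (fun n : ℕ => (S p k / ((k : ℝ) + 1)) *
        ((∏ i ∈ Finset.range (k + 1), ((n : ℝ) + 1 - i)) * x ^ n / n.factorial)) := by
    intro k _
    exact (aux_Lsum x k).1.mul_left _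
  rw [Summable.tsum_finsetSum hsum, Finset.mul_sum]
  apply Finset.sum_congr rfl
  intro k _
  rw [tsum_mul_left, (aux_Lsum x k).2]
  have hk : ((k : ℝ) + 1) ≠ 0 := by positivity
  field_simp
  ring
end

section
/- For p ≥ 0, applying the degenerate differential operator (x d/dx + r)_{p,λ} to e^x yields e^x φ_{p,λ}^{(r)}(x), i.e., (x d/dx + r)_{p,λ} e^x = ∑_{n=0}^∞ (n+r)_{p,λ} x^n/n! = e^x φ_{p,λ}^{(r)}(x). -/
/-- The degenerate differential operator
`(x d/dx + r)_{p,λ} = (x d/dx + r)(x d/dx + r - λ)⋯(x d/dx + r - (p-1)λ)`,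
the innermost (rightmost) factor being applied first. -/
noncomputable def degOp (r l : ℝ) : ℕ → (ℝ → ℝ) → (ℝ → ℝ)
  | 0, f => f
  | p + 1, f => degOp r l p (fun x => x * deriv f x + (r - p * l) * f x)

open Polynomial in
/-- `(x d/dx + c)` acting on `e^x · q(x)` produces `e^x · (stepPoly c q)(x)`. -/
noncomputable def stepPoly (c : ℝ) (q : Polynomial ℝ) : Polynomial ℝ :=
  Polynomial.X * Polynomial.derivative q + (Polynomial.X + Polynomial.C c) * q

/-- Iterated application of `stepPoly` corresponding to `degOp`. -/
noncomputable def Tpoly (r l : ℝ) : ℕ → Polynomial ℝ → Polynomial ℝ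
  | 0, q => q
  | p + 1, q => Tpoly r l p (stepPoly (r - p * l) q)

/-- The "umbral" functional sending `x^k ↦ (n)_k`. -/
noncomputable def Phi (q : Polynomial ℝ) (n : ℕ) : ℝ :=
  q.sum fun k a => a * n.descFactorial k

lemma Phi_add (q r : Polynomial ℝ) (n : ℕ) : Phi (q + r) n = Phi q n + Phi r n :=
  Polynomial.sum_add_index q r _ (fun _ => zero_mul _) (fun _ a b => add_mul a b _)

lemma Phi_monomial (k : ℕ) (a : ℝ) (n : ℕ) :
    Phi (Polynomial.monomial k a) n = a * n.descFactorial k :=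
  Polynomial.sum_monomial_index a _ (zero_mul _)

lemma Phi_one (n : ℕ) : Phi 1 n = 1 := by
  rw [← Polynomial.monomial_zero_one, Phi_monomial]
  simp

lemma dF_cast_succ (n k : ℕ) :
    (n.descFactorial (k + 1) : ℝ) = ((n : ℝ) - k) * n.descFactorial k := by
  rw [← descPochhammer_eval_eq_descFactorial, ← descPochhammer_eval_eq_descFactorial,
    descPochhammer_succ_eval]
  ring

lemma prod_range_cast_dF (n k : ℕ) :
    ∏ i ∈ Finset.range k, ((n : ℝ) - i) = n.descFactorial k := by
  induction k with
  | zero => simp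
  | succ k ih => rw [Finset.prod_range_succ, ih, dF_cast_succ]; ring

lemma dF_add_mul_factorial (n k : ℕ) :
    (n + k).descFactorial k * n.factorial = (n + k).factorial := by
  induction k with
  | zero => simp
  | succ k ih =>
    have h : n + (k + 1) = (n + k) + 1 := by ring
    rw [h, Nat.succ_descFactorial_succ, Nat.factorial_succ, mul_assoc, ih]

lemma hasSum_exp_real (x : ℝ) :
    HasSum (fun n : ℕ => x ^ n / n.factorial) (Real.exp x) := by
  rw [Real.exp_eq_exp_ℝ]
  exact NormedSpace.expSeries_div_hasSum_exp x

lemma hasSum_dF (k : ℕ) (x : ℝ) :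
    HasSum (fun n : ℕ => (n.descFactorial k : ℝ) * x ^ n / n.factorial)
      (x ^ k * Real.exp x) := by
  have h := (hasSum_exp_real x).mul_left (x ^ k)
  have hi : Function.Injective (fun n : ℕ => n + k) := fun a b hab => by
    simpa using hab
  have hzero : ∀ c ∉ Set.range (fun n : ℕ => n + k),
      ((c.descFactorial k : ℝ) * x ^ c / c.factorial) = 0 := by
    intro c hc
    have hck : c < k := by
      by_contra hle
      exact hc ⟨c - k, show c - k + k = c by omega⟩
    rw [Nat.descFactorial_eq_zero_iff_lt.mpr hck]
    simp
  rw [← Function.Injective.hasSum_iff hi hzero]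
  have hfun : ((fun n : ℕ => (n.descFactorial k : ℝ) * x ^ n / n.factorial) ∘
      fun n : ℕ => n + k) = fun n : ℕ => x ^ k * (x ^ n / n.factorial) := by
    funext n
    have h1 : ((n + k).factorial : ℝ) = (n + k).descFactorial k * n.factorial := by
      rw [← dF_add_mul_factorial n k]; push_cast; ring
    have h2 : ((n + k).descFactorial k : ℝ) ≠ 0 := by
      have : ¬ (n + k < k) := by omega
      exact_mod_cast fun h => this (Nat.descFactorial_eq_zero_iff_lt.mp (by exact_mod_cast h))
    have h3 : (n.factorial : ℝ) ≠ 0 := by exact_mod_cast n.factorial_ne_zero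
    simp only [Function.comp_apply, h1, pow_add]
    field_simp
  rw [hfun]
  exact h

lemma Phi_step (c : ℝ) (q : Polynomial ℝ) (n : ℕ) :
    Phi (stepPoly c q) n = ((n : ℝ) + c) * Phi q n := by
  induction q using Polynomial.induction_on' with
  | add p r hp hr =>
    have hsplit : stepPoly c (p + r) = stepPoly c p + stepPoly c r := by
      simp only [stepPoly, Polynomial.derivative_add]; ring
    rw [hsplit, Phi_add, hp, hr, Phi_add]; ring
  | monomial k a =>
    have hX : (Polynomial.X : Polynomial ℝ) = Polynomial.monomial 1 1 :=
      (Polynomial.monomial_one_one_eq_X).symm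
    have hC : (Polynomial.C c : Polynomial ℝ) = Polynomial.monomial 0 c :=
      (Polynomial.monomial_zero_left (a := c)).symm
    cases k with
    | zero =>
      have hstep : stepPoly c (Polynomial.monomial 0 a) =
          Polynomial.monomial 1 a + Polynomial.monomial 0 (c * a) := by
        simp only [stepPoly, Polynomial.derivative_monomial, Nat.cast_zero, mul_zero,
          Polynomial.monomial_zero_right, hX, hC, add_mul,
          Polynomial.monomial_mul_monomial]
        simp
      rw [hstep, Phi_add, Phi_monomial, Phi_monomial, Phi_monomial]
      simp [Nat.descFactorial]
      ring
    | succ k =>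
      have hstep : stepPoly c (Polynomial.monomial (k + 1) a) =
          Polynomial.monomial (k + 1) (a * ((k : ℝ) + 1) + c * a) +
            Polynomial.monomial (k + 2) a := by
        simp only [stepPoly, Polynomial.derivative_monomial, Nat.add_sub_cancel, hX, hC,
          add_mul, Polynomial.monomial_mul_monomial, one_mul, zero_add,
          map_add]
        push_cast
        rw [show (1 : ℕ) + k = k + 1 by omega, show (1 : ℕ) + (k + 1) = k + 2 by omega]
        abel
      rw [hstep, Phi_add, Phi_monomial, Phi_monomial, Phi_monomial, dF_cast_succ n (k + 1)]
      push_cast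
      ring

lemma Phi_Tpoly (r l : ℝ) (p : ℕ) (q : Polynomial ℝ) (n : ℕ) :
    Phi (Tpoly r l p q) n = degFallFact ((n : ℝ) + r) l p * Phi q n := by
  induction p generalizing q with
  | zero => simp [Tpoly, degFallFact]
  | succ p ih =>
    show Phi (Tpoly r l p (stepPoly (r - p * l) q)) n = _
    rw [ih, Phi_step]
    simp only [degFallFact, Finset.prod_range_succ]
    ring

lemma hasSum_Phi (q : Polynomial ℝ) (x : ℝ) :
    HasSum (fun n : ℕ => Phi q n * x ^ n / n.factorial) (Real.exp x * q.eval x) := by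
  induction q using Polynomial.induction_on' with
  | add p r hp hr =>
    have h := hp.add hr
    simp only [Phi_add, Polynomial.eval_add, add_mul, add_div, mul_add] at *
    exact h
  | monomial k a =>
    have h := (hasSum_dF k x).mul_left a
    have hfun : (fun n : ℕ => a * ((n.descFactorial k : ℝ) * x ^ n / n.factorial))
        = fun n : ℕ => Phi (Polynomial.monomial k a) n * x ^ n / n.factorial := by
      funext n
      rw [Phi_monomial]
      ring
    rw [hfun] at h
    have : a * (x ^ k * Real.exp x) = Real.exp x * (Polynomial.monomial k a).eval x := by
      rw [Polynomial.eval_monomial]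
      ring
    rwa [this] at h

lemma degOp_poly (r l : ℝ) (p : ℕ) (q : Polynomial ℝ) (x : ℝ) :
    degOp r l p (fun y => Real.exp y * q.eval y) x
      = Real.exp x * (Tpoly r l p q).eval x := by
  induction p generalizing q x with
  | zero => rfl
  | succ p ih =>
    rw [degOp]
    have hfun : (fun y => y * deriv (fun y => Real.exp y * q.eval y) y +
        (r - p * l) * (Real.exp y * q.eval y))
        = fun y => Real.exp y * (stepPoly (r - p * l) q).eval y := by
      funext y
      have hd : deriv (fun y => Real.exp y * q.eval y) y
          = Real.exp y * q.eval y + Real.exp y * (Polynomial.derivative q).eval y := by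
        rw [deriv_fun_mul (Real.differentiable_exp.differentiableAt) (q.differentiableAt)]
        simp [Polynomial.deriv]
      rw [hd]
      simp only [stepPoly, Polynomial.eval_add, Polynomial.eval_mul, Polynomial.eval_X,
        Polynomial.eval_C]
      ring
    rw [hfun, ih]
    rfl

/-- `(x d/dx + r)_{p,λ} e^x = ∑_{n≥0} (n+r)_{p,λ} x^n/n! = e^x φ_{p,λ}^{(r)}(x)`,
where `φ_{p,λ}^{(r)}(x) = ∑_{k=0}^p {p+r brace k+r}_{r,λ} x^k`. -/
theorem degOp_exp (l : ℝ) (p r : ℕ) (S : ℕ → ℕ → ℝ)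
    (hS : ∀ (m : ℕ) (x : ℝ), degFallFact (x + r) l m =
      ∑ k ∈ Finset.range (m + 1), S m k * ∏ i ∈ Finset.range k, (x - i))
    (x : ℝ) :
    HasSum (fun n : ℕ => degFallFact (n + r) l p * x ^ n / n.factorial)
      (degOp r l p Real.exp x) ∧
    degOp r l p Real.exp x =
      Real.exp x * ∑ k ∈ Finset.range (p + 1), S p k * x ^ k := by
  have key1 : HasSum (fun n : ℕ => degFallFact (n + r) l p * x ^ n / n.factorial)
      (Real.exp x * (Tpoly r l p 1).eval x) := by
    have h := hasSum_Phi (Tpoly r l p 1) x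
    simp only [Phi_Tpoly, Phi_one, mul_one] at h
    exact h
  have key2 : HasSum (fun n : ℕ => degFallFact (n + r) l p * x ^ n / n.factorial)
      (Real.exp x * ∑ k ∈ Finset.range (p + 1), S p k * x ^ k) := by
    have hterm : (fun n : ℕ => degFallFact (n + r) l p * x ^ n / n.factorial)
        = fun n : ℕ => ∑ k ∈ Finset.range (p + 1),
            S p k * ((n.descFactorial k : ℝ) * x ^ n / n.factorial) := by
      funext n
      rw [hS p (n : ℝ)]
      simp only [prod_range_cast_dF, Finset.sum_mul, Finset.sum_div]
      exact Finset.sum_congr rfl fun k _ => by ring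
    have hsum : HasSum (fun n : ℕ => ∑ k ∈ Finset.range (p + 1),
          S p k * ((n.descFactorial k : ℝ) * x ^ n / n.factorial))
        (∑ k ∈ Finset.range (p + 1), S p k * (x ^ k * Real.exp x)) :=
      hasSum_sum fun k _ => (hasSum_dF k x).mul_left (S p k)
    rw [hterm]
    have htarget : (∑ k ∈ Finset.range (p + 1), S p k * (x ^ k * Real.exp x))
        = Real.exp x * ∑ k ∈ Finset.range (p + 1), S p k * x ^ k := by
      rw [Finset.mul_sum]
      exact Finset.sum_congr rfl fun k _ => by ring
    rwa [htarget] at hsum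
  have hval : Real.exp x * (Tpoly r l p 1).eval x
      = Real.exp x * ∑ k ∈ Finset.range (p + 1), S p k * x ^ k :=
    key1.unique key2
  have hop : degOp r l p Real.exp x = Real.exp x * (Tpoly r l p 1).eval x := by
    have h := degOp_poly r l p 1 x
    simpa using h
  constructor
  · rw [hop]; exact key1
  · rw [hop]; exact hval
end
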